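/- Let F and d_F be as in the transfer operator setting, and suppose every pair of preimage points of sufficiently close points ξ, ζ can be joined pairwise by curves of length at most ℓ·e^{-εn} after n pullbacks (contraction of inverse branches). If φ is continuous with modulus of continuity ω_φ, then |A^n φ(ξ) − A^n φ(ζ)| ≤ ω_φ(ℓ e^{-εn}) for ξ, ζ joined by a curve of ε-length ℓ. Consequently the family (A^n φ)_n is uniformly equicontinuous and every uniform limit of a subsequence is locally constant. -/

import Mathlib

open Filter

/-- The `n`-th normalized transfer operator
`Aⁿ(φ)(ξ) = (1/dⁿ) Σ_{Fⁿ(ζ)=ξ} d_{Fⁿ}(ζ) φ(ζ)`, where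
`d_{Fⁿ}(ζ) = ∏_{i<n} d_F(Fⁱζ)`. -/
noncomputable def transferIter {Z : Type*} [MetricSpace Z] (F : Z → Z) (dF : Z → ℕ)
    (d : ℕ) (n : ℕ) (φ : Z → ℝ) (ξ : Z) : ℝ :=
  (1 / (d : ℝ) ^ n) * ∑' ζ : ((F^[n]) ⁻¹' {ξ} : Set Z),
    ((∏ i ∈ Finset.range n, dF (F^[i] (ζ : Z)) : ℕ) : ℝ) * φ (ζ : Z)

/-- Contraction of inverse branches implies uniform equicontinuity of the iterated
transfer operators and local constancy of subsequential uniform limits.  Here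
`J ξ ζ ℓ` means "`ξ` and `ζ` are joined by a curve of ε-length `ℓ`", and `hmatch`
expresses that preimages under `Fⁿ` are matched in pairs (with multiplicity, there
being `dⁿ` preimages counted with multiplicity) at distance at most `ℓ e^{-εn}`. -/
theorem stmt15 {Z : Type*} [MetricSpace Z] [CompactSpace Z]
    (F : Z → Z) (hF : Continuous F) (dF : Z → ℕ) (d : ℕ) (hd : 1 ≤ d)
    (ε : ℝ) (hε : 0 < ε)
    (J : Z → Z → ℝ → Prop)
    (hJnonneg : ∀ ξ ζ ℓ, J ξ ζ ℓ → 0 ≤ ℓ)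
    (hJ : ∀ δ : ℝ, 0 < δ → ∃ r > 0, ∀ ξ ζ : Z, dist ξ ζ < r → ∃ ℓ ≤ δ, J ξ ζ ℓ)
    (φ : Z → ℝ) (hφ : Continuous φ)
    (ω : ℝ → ℝ) (hωmono : Monotone ω) (hω0 : ω 0 = 0) (hωcont : ContinuousAt ω 0)
    (hωmod : ∀ a b : Z, |φ a - φ b| ≤ ω (dist a b))
    (hmatch : ∀ (n : ℕ) (ξ ζ : Z) (ℓ : ℝ), J ξ ζ ℓ →
      ∃ (k : ℕ) (a b : Fin k → Z),
        k = d ^ n ∧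
        (∀ i, F^[n] (a i) = ξ) ∧ (∀ i, F^[n] (b i) = ζ) ∧
        (∀ i, dist (a i) (b i) ≤ ℓ * Real.exp (-ε * n)) ∧
        (∀ ψ : Z → ℝ,
          (∑' η : ((F^[n]) ⁻¹' {ξ} : Set Z),
            ((∏ i ∈ Finset.range n, dF (F^[i] (η : Z)) : ℕ) : ℝ) * ψ (η : Z))
              = ∑ i, ψ (a i)) ∧
        (∀ ψ : Z → ℝ,
          (∑' η : ((F^[n]) ⁻¹' {ζ} : Set Z),
            ((∏ i ∈ Finset.range n, dF (F^[i] (η : Z)) : ℕ) : ℝ) * ψ (η : Z))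
              = ∑ i, ψ (b i))) :
    (∀ (n : ℕ) (ξ ζ : Z) (ℓ : ℝ), J ξ ζ ℓ →
      |transferIter F dF d n φ ξ - transferIter F dF d n φ ζ| ≤ ω (ℓ * Real.exp (-ε * n))) ∧
    (∀ δ : ℝ, 0 < δ → ∃ r > 0, ∀ (n : ℕ) (ξ ζ : Z), dist ξ ζ < r →
      |transferIter F dF d n φ ξ - transferIter F dF d n φ ζ| ≤ δ) ∧
    (∀ (ψ : Z → ℝ) (σ : ℕ → ℕ), StrictMono σ →
      TendstoUniformly (fun k => transferIter F dF d (σ k) φ) ψ atTop →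
      ∀ ξ : Z, ∃ U ∈ nhds ξ, ∀ ζ ∈ U, ψ ζ = ψ ξ) := by
  have hdpos : ∀ n : ℕ, (0:ℝ) < (d:ℝ) ^ n := fun n =>
    pow_pos (by exact_mod_cast hd : (0:ℝ) < d) n
  have hωnonneg : ∀ t : ℝ, 0 ≤ t → 0 ≤ ω t := fun t ht => hω0 ▸ hωmono ht
  -- Part 1
  have part1 : ∀ (n : ℕ) (ξ ζ : Z) (ℓ : ℝ), J ξ ζ ℓ →
      |transferIter F dF d n φ ξ - transferIter F dF d n φ ζ| ≤ ω (ℓ * Real.exp (-ε * n)) := by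
    intro n ξ ζ ℓ hJξζ
    obtain ⟨k, a, b, hk, -, -, hdist, hsa, hsb⟩ := hmatch n ξ ζ ℓ hJξζ
    unfold transferIter
    rw [hsa φ, hsb φ, ← mul_sub, abs_mul, abs_of_pos (by positivity : (0:ℝ) < 1 / (d:ℝ)^n)]
    have hsum : |∑ i, φ (a i) - ∑ i, φ (b i)| ≤ (k : ℝ) * ω (ℓ * Real.exp (-ε * n)) := by
      rw [← Finset.sum_sub_distrib]
      calc |∑ i, (φ (a i) - φ (b i))| ≤ ∑ i, |φ (a i) - φ (b i)| :=
            Finset.abs_sum_le_sum_abs _ _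
        _ ≤ ∑ _i : Fin k, ω (ℓ * Real.exp (-ε * n)) := by
            apply Finset.sum_le_sum
            intro i _
            exact (hωmod (a i) (b i)).trans (hωmono (hdist i))
        _ = (k : ℝ) * ω (ℓ * Real.exp (-ε * n)) := by
            simp [Finset.sum_const, mul_comm]
    calc 1 / (d:ℝ)^n * |∑ i, φ (a i) - ∑ i, φ (b i)|
        ≤ 1 / (d:ℝ)^n * ((k : ℝ) * ω (ℓ * Real.exp (-ε * n))) := by
          exact mul_le_mul_of_nonneg_left hsum (by positivity)
      _ = ω (ℓ * Real.exp (-ε * n)) := by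
          subst hk
          field_simp
          rw [Nat.cast_pow]
  refine ⟨part1, ?_, ?_⟩
  -- Part 2
  · intro δ hδ
    obtain ⟨δ', hδ', hωsmall⟩ := Metric.continuousAt_iff.mp hωcont δ hδ
    obtain ⟨r, hr, hball⟩ := hJ (δ'/2) (by linarith)
    refine ⟨r, hr, fun n ξ ζ hdξζ => ?_⟩
    obtain ⟨ℓ, hℓδ, hJξζ⟩ := hball ξ ζ hdξζ
    have hℓ0 := hJnonneg ξ ζ ℓ hJξζ
    have hexp : Real.exp (-ε * n) ≤ 1 := by
      apply Real.exp_le_one_iff.mpr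
      have : (0:ℝ) ≤ ε * n := by positivity
      linarith
    have hle : ℓ * Real.exp (-ε * n) ≤ δ'/2 :=
      le_trans (mul_le_of_le_one_right hℓ0 hexp) hℓδ
    have h1 := part1 n ξ ζ ℓ hJξζ
    have h2 : ω (ℓ * Real.exp (-ε * n)) ≤ ω (δ'/2) := hωmono hle
    have h3 : ω (δ'/2) < δ := by
      have := hωsmall (x := δ'/2) (by rw [Real.dist_eq]; rw [abs_of_pos (by linarith)]; linarith)
      rw [Real.dist_eq, hω0, sub_zero] at this
      calc ω (δ'/2) ≤ |ω (δ'/2)| := le_abs_self _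
        _ < δ := this
    linarith
  -- Part 3
  · intro ψ σ hσ hconv ξ
    obtain ⟨r, hr, hball⟩ := hJ 1 one_pos
    refine ⟨Metric.ball ξ r, Metric.ball_mem_nhds ξ hr, fun ζ hζ => ?_⟩
    obtain ⟨ℓ, hℓ1, hJξζ⟩ := hball ξ ζ (by rw [dist_comm]; exact hζ)
    have hℓ0 := hJnonneg ξ ζ ℓ hJξζ
    have hptξ : Tendsto (fun k => transferIter F dF d (σ k) φ ξ) atTop (nhds (ψ ξ)) :=
      hconv.tendsto_at ξ
    have hptζ : Tendsto (fun k => transferIter F dF d (σ k) φ ζ) atTop (nhds (ψ ζ)) :=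
      hconv.tendsto_at ζ
    have habs : Tendsto (fun k => |transferIter F dF d (σ k) φ ξ
        - transferIter F dF d (σ k) φ ζ|) atTop (nhds |ψ ξ - ψ ζ|) :=
      ((hptξ.sub hptζ).abs)
    have hbound : Tendsto (fun k => ω (ℓ * Real.exp (-ε * (σ k)))) atTop (nhds 0) := by
      have hσtop : Tendsto (fun k => (σ k : ℝ)) atTop atTop :=
        tendsto_natCast_atTop_atTop.comp hσ.tendsto_atTop
      have harg : Tendsto (fun k => ℓ * Real.exp (-ε * (σ k))) atTop (nhds 0) := by
        have : Tendsto (fun k => Real.exp (-ε * (σ k))) atTop (nhds 0) := by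
          apply Real.tendsto_exp_atBot.comp
          exact (tendsto_const_mul_atBot_of_neg (by linarith)).mpr hσtop
        simpa using this.const_mul ℓ
      have := hωcont.tendsto.comp harg
      rwa [hω0] at this
    have hle : |ψ ξ - ψ ζ| ≤ 0 := by
      refine le_of_tendsto_of_tendsto' habs hbound fun k => ?_
      exact part1 (σ k) ξ ζ ℓ hJξζ
    have : ψ ξ = ψ ζ := by
      have := abs_nonneg (ψ ξ - ψ ζ)
      have : |ψ ξ - ψ ζ| = 0 := le_antisymm hle this
      linarith [abs_eq_zero.mp this]
    exact this.symm
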